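/- The Wick rotation W acting on monomials by W(z^P z̄^Q) = i^{∑_{k=s}^n (P_k+Q_k)} z^P z̄^Q intertwines the Wick star products of signature s and signature 1+n: W(z^P z̄^Q ⋆^{(s)} z^R z̄^S) = W(z^P z̄^Q) ⋆^{(1+n)} W(z^R z̄^S), where ⋆^{(s)} has sign vector ν^{(s)} with ν_k = 1 for k < s and ν_k = -1 for k ≥ s, and ⋆^{(1+n)} has all ν_k = 1. -/

import Mathlib

open scoped BigOperators

namespace WickStar

/-- Multiindices `P ∈ ℕ₀^{1+n}`. -/
abbrev Multi (n : ℕ) := Fin (n + 1) → ℕ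

/-- Index of the monomial `z^P z̄^Q`. -/
abbrev Idx (n : ℕ) := Multi n × Multi n

/-- The free `ℂ[[λ]]`-module with basis the monomials `z^P z̄^Q`. -/
abbrev Poly (n : ℕ) := Idx n →₀ PowerSeries ℂ

/-- `sgn_ν(T) = ∏_k ν_k^{T_k}`. -/
def sgn {n : ℕ} (ν : Fin (n + 1) → ℤ) (T : Multi n) : ℂ :=
  ∏ k, ((ν k : ℂ)) ^ (T k)

/-- The structure constant `sgn(T) λ^{|T|} T! C(Q,T) C(R,T)` of the Wick star product. -/
noncomputable def coeffT {n : ℕ} (ν : Fin (n + 1) → ℤ) (Q R T : Multi n) :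
    PowerSeries ℂ :=
  PowerSeries.C (R := ℂ) (sgn ν T * (∏ k, ((T k).factorial : ℂ))
      * (∏ k, ((Q k).choose (T k) : ℂ)) * (∏ k, ((R k).choose (T k) : ℂ)))
    * PowerSeries.X ^ (∑ k, T k)

/-- The Wick star product of two basis monomials. -/
noncomputable def mulMonom {n : ℕ} (ν : Fin (n + 1) → ℤ) (PQ RS : Idx n) : Poly n :=
  ∑ T ∈ Finset.Iic (fun k => min (PQ.2 k) (RS.1 k)),
    Finsupp.single (PQ.1 + RS.1 - T, PQ.2 + RS.2 - T) (coeffT ν PQ.2 RS.1 T)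

/-- The `ℂ[[λ]]`-bilinear extension of the Wick star product. -/
noncomputable def wickMul {n : ℕ} (ν : Fin (n + 1) → ℤ) (f g : Poly n) : Poly n :=
  f.sum fun pq a => g.sum fun rs b => (a * b) • mulMonom ν pq rs

/-- The Wick-rotation degree `∑_{k=s}^n (P_k + Q_k)` of a monomial `z^P z̄^Q`. -/
def wdeg {n : ℕ} (s : ℕ) (pq : Idx n) : ℕ :=
  ∑ k ∈ Finset.univ.filter (fun k : Fin (n + 1) => s ≤ (k : ℕ)), (pq.1 k + pq.2 k)

/-- The Wick rotation, acting on monomials by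
`W(z^P z̄^Q) = i^{∑_{k=s}^n (P_k+Q_k)} z^P z̄^Q` and extended `ℂ[[λ]]`-linearly. -/
noncomputable def wrot {n : ℕ} (s : ℕ) (f : Poly n) : Poly n :=
  f.sum fun pq a => Finsupp.single pq (PowerSeries.C (R := ℂ) (Complex.I ^ wdeg s pq) * a)

end WickStar


private lemma finsupp_sum_finset_sum {ι α M N : Type*} [AddCommMonoid M] [AddCommMonoid N]
    (s : Finset ι) (f : ι → (α →₀ M)) (h : α → M → N)
    (h0 : ∀ a, h a 0 = 0) (hadd : ∀ a b1 b2, h a (b1 + b2) = h a b1 + h a b2) :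
    (∑ i ∈ s, f i).sum h = ∑ i ∈ s, (f i).sum h := by
  classical
  induction s using Finset.induction with
  | empty => simp
  | insert _ _ hx ih =>
      rw [Finset.sum_insert hx, Finset.sum_insert hx,
        Finsupp.sum_add_index' h0 hadd, ih]

/-- The Wick rotation `W(z^P z̄^Q) = i^{∑_{k=s}^n (P_k+Q_k)} z^P z̄^Q`
intertwines the Wick star product of signature `s` (sign vector `ν_k = 1` for `k < s`,
`ν_k = -1` for `k ≥ s`) and the Wick star product of signature `1+n` (all `ν_k = 1`):
`W(z^P z̄^Q ⋆^{(s)} z^R z̄^S) = W(z^P z̄^Q) ⋆^{(1+n)} W(z^R z̄^S)`. -/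
theorem wick_rotation_intertwines_star_products
    (n s : ℕ) (hs1 : 1 ≤ s) (hs2 : s ≤ n + 1) (P Q R S : WickStar.Multi n) :
    WickStar.wrot s
        (WickStar.wickMul (fun k : Fin (n + 1) => if (k : ℕ) < s then 1 else -1)
          (Finsupp.single (P, Q) 1) (Finsupp.single (R, S) 1))
      = WickStar.wickMul (fun _ : Fin (n + 1) => (1 : ℤ))
          (WickStar.wrot s (Finsupp.single (P, Q) 1))
          (WickStar.wrot s (Finsupp.single (R, S) 1)) := by
  classical
  have hmul : ∀ (ν' : Fin (n+1) → ℤ) (pq rs : WickStar.Idx n) (a b : PowerSeries ℂ),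
      WickStar.wickMul ν' (Finsupp.single pq a) (Finsupp.single rs b)
        = (a * b) • WickStar.mulMonom ν' pq rs := by
    intro ν' pq rs a b
    simp [WickStar.wickMul, Finsupp.sum_single_index]
  have hws : ∀ (pq : WickStar.Idx n) (c : PowerSeries ℂ),
      WickStar.wrot s (Finsupp.single pq c)
        = Finsupp.single pq (PowerSeries.C (R := ℂ) (Complex.I ^ WickStar.wdeg s pq) * c) := by
    intro pq c
    simp [WickStar.wrot, Finsupp.sum_single_index]
  rw [hmul, one_mul, one_smul, hws, hws, hmul, WickStar.mulMonom, WickStar.mulMonom,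
    WickStar.wrot,
    finsupp_sum_finset_sum _ _ _ (fun a => by simp) (fun a b1 b2 => by simp [mul_add]),
    Finset.smul_sum]
  refine Finset.sum_congr rfl fun T hT => ?_
  have hT' := Finset.mem_Iic.mp hT
  rw [Finsupp.sum_single_index (by simp), Finsupp.smul_single, smul_eq_mul]
  set F := Finset.univ.filter (fun k : Fin (n+1) => s ≤ (k : ℕ)) with hF
  have hd : WickStar.wdeg s (P + R - T, Q + S - T) + 2 * (∑ k ∈ F, T k)
      = WickStar.wdeg s (P, Q) + WickStar.wdeg s (R, S) := by
    simp only [WickStar.wdeg, Finset.mul_sum, ← Finset.sum_add_distrib, ← hF]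
    refine Finset.sum_congr rfl fun k hk => ?_
    have h1 : T k ≤ Q k := le_trans (hT' k) (min_le_left _ _)
    have h2 : T k ≤ R k := le_trans (hT' k) (min_le_right _ _)
    simp only [Pi.add_apply, Pi.sub_apply]
    omega
  have hkey : Complex.I ^ WickStar.wdeg s (P + R - T, Q + S - T)
      * (-1 : ℂ) ^ (∑ k ∈ F, T k)
      = Complex.I ^ WickStar.wdeg s (P, Q) * Complex.I ^ WickStar.wdeg s (R, S) := by
    rw [← pow_add, ← hd, pow_add, pow_mul, Complex.I_sq]
  have hsgn : WickStar.sgn (fun k : Fin (n+1) => if (k : ℕ) < s then 1 else -1) T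
      = (-1 : ℂ) ^ (∑ k ∈ F, T k) := by
    rw [← Finset.prod_pow_eq_pow_sum, hF, Finset.prod_filter, WickStar.sgn]
    refine Finset.prod_congr rfl fun k _ => ?_
    by_cases h : (k : ℕ) < s
    · simp [h, Nat.not_le.mpr h]
    · simp [h, Nat.not_lt.mp h]
  have hsgn1 : WickStar.sgn (fun _ : Fin (n+1) => (1 : ℤ)) T = 1 := by
    simp [WickStar.sgn]
  congr 1
  simp only [WickStar.coeffT, mul_one, ← mul_assoc, ← map_mul]
  congr 1
  rw [hsgn1, hsgn, ← hkey]
  ring
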